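/- Let n be an odd positive integer and let s, w be complex numbers with Re(s) > 1/2 and Re(w) > 0. Then the series Σ_{h ≥ 1, h odd} h^{−2s} · Π_{p | h, p prime} (1 − χ_n(p) p^{−w}) converges absolutely and equals the Euler product Π_{p odd prime} (1 − χ_n(p) p^{−2s−w}) / (1 − p^{−2s}). -/

import Mathlib

open Complex LSeries
open scoped LSeries.notation

private lemma squarefree_prod_primes' {s : Finset ℕ} (hs : ∀ p ∈ s, p.Prime) :
    Squarefree (∏ p ∈ s, p) := by
  induction s using Finset.cons_induction with
  | empty => simp
  | cons a t ha ih =>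
    rw [Finset.prod_cons]
    have hap := hs a (Finset.mem_cons_self a t)
    have hcop : Nat.Coprime a (∏ p ∈ t, p) :=
      Nat.Coprime.prod_right fun q hq =>
        (Nat.coprime_primes hap (hs q (Finset.mem_cons_of_mem hq))).mpr
          (fun h => ha (h ▸ hq))
    rw [Nat.squarefree_mul hcop]
    exact ⟨hap.squarefree, ih fun p hp => hs p (Finset.mem_cons_of_mem hp)⟩

private lemma prod_one_add_le_sum_divisors' {τ : ℝ} {h : ℕ} (hh : h ≠ 0) :
    ∏ p ∈ h.primeFactors, (1 + (p : ℝ) ^ (-τ)) ≤ ∑ d ∈ h.divisors, (d : ℝ) ^ (-τ) := by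
  classical
  set F : ArithmeticFunction ℝ := ⟨fun d => if d = 0 then 0 else (d : ℝ) ^ (-τ), by simp⟩
    with hF
  have hFap : ∀ {d : ℕ}, d ≠ 0 → F d = (d : ℝ) ^ (-τ) := fun {d} hd => by
    simp [hF, ArithmeticFunction.coe_mk, hd]
  have hFm : F.IsMultiplicative := by
    constructor
    · rw [hFap one_ne_zero]; simp
    · intro m k hcop
      rcases eq_or_ne m 0 with rfl | hm
      · obtain rfl := (Nat.coprime_zero_left k).mp hcop
        simp [hF]
      rcases eq_or_ne k 0 with rfl | hk
      · obtain rfl := (Nat.coprime_zero_right m).mp hcop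
        simp [hF]
      rw [hFap (mul_ne_zero hm hk), hFap hm, hFap hk, Nat.cast_mul,
        Real.mul_rpow (Nat.cast_nonneg m) (Nat.cast_nonneg k)]
  have hpr : ∀ p ∈ h.primeFactors, p.Prime := fun p hp => Nat.prime_of_mem_primeFactors hp
  have hsqf : Squarefree (∏ p ∈ h.primeFactors, p) := squarefree_prod_primes' hpr
  have hrpf : (∏ p ∈ h.primeFactors, p).primeFactors = h.primeFactors :=
    Nat.primeFactors_prod hpr
  calc ∏ p ∈ h.primeFactors, (1 + (p : ℝ) ^ (-τ))
      = ∏ p ∈ (∏ p ∈ h.primeFactors, p).primeFactors, (1 + F p) := by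
        rw [hrpf]
        exact Finset.prod_congr rfl fun p hp => by rw [hFap (hpr p hp).pos.ne']
    _ = ∑ d ∈ (∏ p ∈ h.primeFactors, p).divisors, F d :=
        hFm.prodPrimeFactors_one_add_of_squarefree hsqf
    _ ≤ ∑ d ∈ h.divisors, F d := by
        refine Finset.sum_le_sum_of_subset_of_nonneg
          (Nat.divisors_subset_of_dvd hh (Nat.prod_primeFactors_dvd h)) (fun d _ _ => ?_)
        rcases eq_or_ne d 0 with rfl | hd
        · simp [hF]
        · rw [hFap hd]; positivity
    _ = ∑ d ∈ h.divisors, (d : ℝ) ^ (-τ) :=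
        Finset.sum_congr rfl fun d hd => hFap (Nat.pos_of_mem_divisors hd).ne'

theorem euler_product_sum_over_odd_h (n : ℕ) (hn : 0 < n) (hnodd : Odd n)
    (s w : ℂ) (hs : 1 / 2 < s.re) (hw : 0 < w.re) :
    Summable (fun h : ℕ =>
      ‖if Odd h then (h : ℂ) ^ (-(2 * s)) *
          ∏ p ∈ h.primeFactors, (1 - (jacobiSym p n : ℂ) * (p : ℂ) ^ (-w))
        else 0‖) ∧
    (∑' h : ℕ, if Odd h then (h : ℂ) ^ (-(2 * s)) *
        ∏ p ∈ h.primeFactors, (1 - (jacobiSym p n : ℂ) * (p : ℂ) ^ (-w))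
      else 0) =
      ∏' p : {p : ℕ // p.Prime ∧ Odd p},
        (1 - (jacobiSym p n : ℂ) * (p : ℂ) ^ (-(2 * s) - w)) / (1 - (p : ℂ) ^ (-(2 * s))) := by
  classical
  set f : ℕ → ℂ := fun h => if Odd h then (h : ℂ) ^ (-(2 * s)) *
      ∏ p ∈ h.primeFactors, (1 - (jacobiSym p n : ℂ) * (p : ℂ) ^ (-w)) else 0 with hfdef
  have h2s : 1 < (2 * s).re := by
    have : (2 * s).re = 2 * s.re := by simp [Complex.mul_re]
    rw [this]; linarith
  have hχ : ∀ p : ℕ, ‖(jacobiSym p n : ℂ)‖ ≤ 1 := by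
    intro p
    rcases jacobiSym.trichotomy p n with h' | h' | h' <;> rw [h'] <;> norm_num
  have hf0 : f 0 = 0 := by simp [hfdef]
  have hf1 : f 1 = 1 := by simp [hfdef]
  have hmul : ∀ {m k : ℕ}, Nat.Coprime m k → f (m * k) = f m * f k := by
    intro m k hcop
    rcases eq_or_ne m 0 with rfl | hm
    · obtain rfl := (Nat.coprime_zero_left k).mp hcop
      simp [hf0, hf1]
    rcases eq_or_ne k 0 with rfl | hk
    · obtain rfl := (Nat.coprime_zero_right m).mp hcop
      simp [hf0, hf1]
    by_cases hodd : Odd (m * k)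
    · have hom : Odd m := (Nat.odd_mul.mp hodd).1
      have hok : Odd k := (Nat.odd_mul.mp hodd).2
      simp only [hfdef, if_pos hodd, if_pos hom, if_pos hok]
      rw [Nat.cast_mul, natCast_mul_natCast_cpow,
        Nat.primeFactors_mul hm hk, Finset.prod_union (Nat.Coprime.disjoint_primeFactors hcop)]
      ring
    · have h0 : f (m * k) = 0 := by simp [hfdef, hodd]
      have : ¬ (Odd m ∧ Odd k) := fun ⟨h1, h2⟩ => hodd (Nat.odd_mul.mpr ⟨h1, h2⟩)
      rcases not_and_or.mp this with h' | h'
      · have : f m = 0 := by simp [hfdef, h']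
        rw [h0, this, zero_mul]
      · have : f k = 0 := by simp [hfdef, h']
        rw [h0, this, mul_zero]
  -- summability
  set g : ℕ → ℂ := fun d => if d = 0 then 0 else ((d : ℝ) ^ (-w.re) : ℝ) with hgdef
  set o : ℕ → ℂ := fun d => if d = 0 then 0 else 1 with hodef
  have hg : LSeriesSummable g (2 * s) := by
    refine LSeriesSummable_of_bounded_of_one_lt_re (m := 1) (fun d hd => ?_) h2s
    simp only [hgdef, if_neg hd]
    rw [Complex.norm_real,
      Real.norm_of_nonneg (Real.rpow_nonneg (Nat.cast_nonneg d) _)]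
    exact Real.rpow_le_one_of_one_le_of_nonpos
      (by exact_mod_cast Nat.one_le_iff_ne_zero.mpr hd) (by linarith)
  have ho : LSeriesSummable o (2 * s) := by
    refine LSeriesSummable_of_bounded_of_one_lt_re (m := 1) (fun d hd => ?_) h2s
    simp [hodef, hd]
  have hconv : LSeriesSummable (g ⍟ o) (2 * s) := hg.convolution ho
  have hnorm : Summable fun h : ℕ => ‖term (g ⍟ o) (2 * s) h‖ := summable_norm_iff.mpr hconv
  have hle : ∀ h : ℕ, ‖f h‖ ≤ ‖term (g ⍟ o) (2 * s) h‖ := by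
    intro h
    rcases eq_or_ne h 0 with rfl | hh
    · simp [hf0]
    have hhpos : (0:ℝ) < (h : ℝ) := by exact_mod_cast Nat.pos_of_ne_zero hh
    have hgo : (g ⍟ o) h = ((∑ d ∈ h.divisors, (d : ℝ) ^ (-w.re) : ℝ) : ℂ) := by
      simp only [convolution_def]
      rw [Nat.sum_divisorsAntidiagonal (f := fun i j => g i * o j)]
      push_cast
      refine Finset.sum_congr rfl fun d hd => ?_
      have hd0 : d ≠ 0 := (Nat.pos_of_mem_divisors hd).ne'
      have hd1 : h / d ≠ 0 :=
        (Nat.div_pos (Nat.le_of_dvd (Nat.pos_of_ne_zero hh) (Nat.dvd_of_mem_divisors hd))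
          (Nat.pos_of_mem_divisors hd)).ne'
      simp [hgdef, hodef, hd0, hd1]
    have hsumnn : (0:ℝ) ≤ ∑ d ∈ h.divisors, (d : ℝ) ^ (-w.re) :=
      Finset.sum_nonneg fun d _ => Real.rpow_nonneg (Nat.cast_nonneg d) _
    have hRHS : ‖term (g ⍟ o) (2 * s) h‖
        = (∑ d ∈ h.divisors, (d : ℝ) ^ (-w.re)) / (h : ℝ) ^ (2 * s).re := by
      rw [term_of_ne_zero hh, hgo, norm_div, norm_natCast_cpow_of_pos (Nat.pos_of_ne_zero hh),
        Complex.norm_real, Real.norm_of_nonneg hsumnn]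
    rw [hRHS]
    by_cases hodd : Odd h
    · have hLHS : ‖f h‖ = ((h:ℝ) ^ (2 * s).re)⁻¹ *
          ‖∏ p ∈ h.primeFactors, (1 - (jacobiSym p n : ℂ) * (p : ℂ) ^ (-w))‖ := by
        simp only [hfdef, if_pos hodd, norm_mul]
        rw [norm_natCast_cpow_of_pos (Nat.pos_of_ne_zero hh), Complex.neg_re,
          Real.rpow_neg hhpos.le]
      rw [hLHS]
      have hprod : ‖∏ p ∈ h.primeFactors, (1 - (jacobiSym p n : ℂ) * (p : ℂ) ^ (-w))‖
          ≤ ∑ d ∈ h.divisors, (d : ℝ) ^ (-w.re) := by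
        calc ‖∏ p ∈ h.primeFactors, (1 - (jacobiSym p n : ℂ) * (p : ℂ) ^ (-w))‖
            = ∏ p ∈ h.primeFactors, ‖1 - (jacobiSym p n : ℂ) * (p : ℂ) ^ (-w)‖ :=
              norm_prod _ _
          _ ≤ ∏ p ∈ h.primeFactors, (1 + (p : ℝ) ^ (-w.re)) := by
              refine Finset.prod_le_prod (fun _ _ => norm_nonneg _) (fun p hp => ?_)
              have hppos : 0 < p := (Nat.prime_of_mem_primeFactors hp).pos
              refine (norm_sub_le _ _).trans ?_
              rw [norm_one, norm_mul, norm_natCast_cpow_of_pos hppos, Complex.neg_re]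
              have : ‖(jacobiSym p n : ℂ)‖ * (p:ℝ) ^ (-w.re) ≤ 1 * (p:ℝ) ^ (-w.re) :=
                mul_le_mul_of_nonneg_right (hχ p) (Real.rpow_nonneg (Nat.cast_nonneg p) _)
              linarith
          _ ≤ ∑ d ∈ h.divisors, (d : ℝ) ^ (-w.re) := prod_one_add_le_sum_divisors' hh
      calc ((h:ℝ) ^ (2 * s).re)⁻¹ * ‖∏ p ∈ h.primeFactors,
              (1 - (jacobiSym p n : ℂ) * (p : ℂ) ^ (-w))‖
          ≤ ((h:ℝ) ^ (2 * s).re)⁻¹ * ∑ d ∈ h.divisors, (d : ℝ) ^ (-w.re) :=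
            mul_le_mul_of_nonneg_left hprod (inv_nonneg.mpr (Real.rpow_nonneg hhpos.le _))
        _ = (∑ d ∈ h.divisors, (d : ℝ) ^ (-w.re)) / (h : ℝ) ^ (2 * s).re := by
            rw [mul_comm, div_eq_mul_inv]
    · have : ‖f h‖ = 0 := by simp [hfdef, hodd]
      rw [this]
      positivity
  have hsum : Summable fun h : ℕ => ‖f h‖ :=
    Summable.of_nonneg_of_le (fun _ => norm_nonneg _) hle hnorm
  refine ⟨hsum, ?_⟩
  have hkey := EulerProduct.eulerProduct_hasProd_mulIndicator hf1 hmul hsum hf0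
  set G : ℕ → ℂ := fun p => (1 - (jacobiSym p n : ℂ) * (p : ℂ) ^ (-(2 * s) - w)) /
      (1 - (p : ℂ) ^ (-(2 * s))) with hGdef
  have hind : (Set.mulIndicator {p : ℕ | Nat.Prime p} fun p => ∑' e, f (p ^ e))
      = Set.mulIndicator {p : ℕ | Nat.Prime p ∧ Odd p} G := by
    ext p
    by_cases hp : p.Prime
    · by_cases hop : Odd p
      · rw [Set.mulIndicator_of_mem (by exact hp : p ∈ {p : ℕ | Nat.Prime p}),
          Set.mulIndicator_of_mem (by exact ⟨hp, hop⟩ : p ∈ {p : ℕ | Nat.Prime p ∧ Odd p})]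
        have hpne : (p:ℂ) ≠ 0 := Nat.cast_ne_zero.mpr hp.pos.ne'
        set y := (p:ℂ) ^ (-(2*s)) with hy
        set c := 1 - (jacobiSym p n : ℂ) * (p:ℂ) ^ (-w) with hc
        have hynorm : ‖y‖ < 1 := by
          rw [hy, norm_natCast_cpow_of_pos hp.pos, Complex.neg_re]
          exact Real.rpow_lt_one_of_one_lt_of_neg (by exact_mod_cast hp.one_lt) (by linarith)
        have hy1 : (1:ℂ) - y ≠ 0 := by
          intro hcon
          have hyy : y = 1 := by linear_combination -hcon
          rw [hyy] at hynorm; simp at hynorm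
        have hfe : ∀ e : ℕ, f (p ^ e) = c * y ^ e + (if e = 0 then 1 - c else 0) := by
          intro e
          cases e with
          | zero => rw [pow_zero, hf1]; simp
          | succ e =>
            have hoddpe : Odd (p ^ (e+1)) := hop.pow
            have hpf : (p ^ (e+1)).primeFactors = {p} :=
              Nat.primeFactors_prime_pow (Nat.succ_ne_zero e) hp
            simp only [hfdef, if_pos hoddpe, hpf, Finset.prod_singleton,
              if_neg (Nat.succ_ne_zero e), add_zero]
            rw [Nat.cast_pow, ← natCast_cpow_natCast_mul, cpow_nat_mul]
            rw [hy, hc]; ring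
        calc (∑' e : ℕ, f (p ^ e))
            = ∑' e : ℕ, (c * y ^ e + (if e = 0 then 1 - c else 0)) := tsum_congr hfe
          _ = c * (1 - y)⁻¹ + (1 - c) := by
              rw [Summable.tsum_add (Summable.mul_left c (summable_geometric_of_norm_lt_one hynorm))
                ((hasSum_ite_eq 0 (1 - c)).summable), tsum_mul_left,
                tsum_geometric_of_norm_lt_one hynorm, tsum_ite_eq]
          _ = G p := by
              have hsplit : (p:ℂ) ^ (-(2*s) - w) = y * (p:ℂ) ^ (-w) := by
                rw [sub_eq_add_neg, cpow_add _ _ hpne, hy]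
              rw [hGdef]
              simp only
              rw [hsplit, hc, ← hy]
              field_simp
              ring
      · rw [Set.mulIndicator_of_mem (by exact hp : p ∈ {p : ℕ | Nat.Prime p}),
          Set.mulIndicator_of_notMem (fun hmem => hop hmem.2)]
        have hp2 : p = 2 := (Nat.Prime.even_iff hp).mp (Nat.not_odd_iff_even.mp hop)
        subst hp2
        have hev : ∀ e : ℕ, e ≠ 0 → f (2 ^ e) = 0 := fun e he => by
          have h2e : ¬ Odd (2 ^ e) :=
            Nat.not_odd_iff_even.mpr (Nat.even_pow.mpr ⟨even_two, he⟩)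
          simp [hfdef, h2e]
        rw [tsum_eq_single 0 hev, pow_zero, hf1]
    · rw [Set.mulIndicator_of_notMem (by exact hp : p ∉ {p : ℕ | Nat.Prime p}),
        Set.mulIndicator_of_notMem (fun hmem => hp hmem.1)]
  rw [hind] at hkey
  have hkey2 : HasProd ((G ∘ (↑)) : {p : ℕ | Nat.Prime p ∧ Odd p} → ℂ) (∑' h, f h) :=
    hasProd_subtype_iff_mulIndicator.mpr hkey
  exact hkey2.tprod_eq.symm
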